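/- Let (S,w) be an instance of the hereditary 2-3-Set Packing problem, let A ⊆ S be a disjoint sub-collection such that no local improvement of A of size at most 10 exists, and suppose some v ∈ B \ (B_1 ∪ B_2) intersects only sets of A. If every set of A intersected by v belongs to the class C of sets receiving exactly their own weight in the first weight-distribution step, this yields a contradiction; formally: under the stated no-local-improvement assumption, there is no v ∈ B \ (B_1 ∪ B_2) with N(v, A) ⊆ C. -/
import Mathlib


open scoped Classical

namespace SetPacking

variable {α : Type*}

/-- Weight of a set: `|s| - 1` (so 1 for 2-element sets and 2 for 3-element sets). -/
noncomputable def wt (s : Finset α) : ℕ := s.card - 1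

/-- Total weight of a collection of sets. -/
noncomputable def wsum (X : Finset (Finset α)) : ℕ := ∑ s ∈ X, wt s

/-- `N(X, A)`: the sets of `A` intersecting some member of `X` (this includes `X ∩ A`
when the sets involved are nonempty). -/
noncomputable def nbhd (X A : Finset (Finset α)) : Finset (Finset α) :=
  A.filter (fun a => ∃ x ∈ X, (x ∩ a).Nonempty)

/-- A sub-collection consisting of pairwise disjoint sets. -/
def PairwiseDisjointSets (X : Finset (Finset α)) : Prop :=
  ∀ x ∈ X, ∀ y ∈ X, x ≠ y → x ∩ y = ∅

/-- `X` is a local improvement of `A`: a disjoint sub-collection with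
`w(X) > w(N(X, A))`, or equal weight and strictly more weight-2 (i.e. 3-element)
sets in `X` than in `N(X, A)`. -/
def IsLocalImprovement (A X : Finset (Finset α)) : Prop :=
  PairwiseDisjointSets X ∧
    (wsum (nbhd X A) < wsum X ∨
      (wsum X = wsum (nbhd X A) ∧
        ((nbhd X A).filter (fun s => s.card = 3)).card
          < (X.filter (fun s => s.card = 3)).card))

/-- `B₁`: the sets of `B` with exactly one neighbor in `A` (in the conflict graph). -/
noncomputable def B1 (A B : Finset (Finset α)) : Finset (Finset α) :=
  B.filter (fun v => (A.filter (fun a => (v ∩ a).Nonempty)).card = 1)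

/-- `B₂`: the weight-2 sets of `B` with exactly two incident edges in the multigraph
conflict graph (that is, `∑_{a ∈ A} |v ∩ a| = 2`), connecting to two distinct sets
of `A`. -/
noncomputable def B2 (A B : Finset (Finset α)) : Finset (Finset α) :=
  B.filter (fun v => v.card = 3 ∧ (∑ a ∈ A, (v ∩ a).card) = 2 ∧
    (A.filter (fun a => (v ∩ a).Nonempty)).card = 2)

/-- The total amount of weight that `u` receives in the first distribution step:
each `v ∈ B₁` sends its weight `wt v` to its unique neighbor in `A`, and each
`v ∈ B₂` sends 1 along each of its two edges (one unit to each of its two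
distinct neighbors in `A`). -/
noncomputable def received (A B : Finset (Finset α)) (u : Finset α) : ℕ :=
  (∑ v ∈ (B1 A B).filter (fun v => (v ∩ u).Nonempty), wt v) +
    ((B2 A B).filter (fun v => (v ∩ u).Nonempty)).card

/-- `C`: the sets of `A` receiving exactly their own weight in the first step. -/
noncomputable def Cset (A B : Finset (Finset α)) : Finset (Finset α) :=
  A.filter (fun u => received A B u = wt u)

end SetPacking

open SetPacking

section Aux

variable {α : Type*}

lemma aux_wt_one_le {s : Finset α} (h : 2 ≤ s.card) : 1 ≤ wt s := by
  unfold wt; omega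

/-- The number of members of a pairwise-disjoint family intersected by `v` is at most `|v|`. -/
lemma aux_card_nbr_le {A : Finset (Finset α)} (hA : PairwiseDisjointSets A) (v : Finset α) :
    (A.filter (fun a => (v ∩ a).Nonempty)).card ≤ v.card := by
  set N := A.filter (fun a => (v ∩ a).Nonempty) with hN
  have hdisj : ∀ a ∈ N, ∀ b ∈ N, a ≠ b → Disjoint (v ∩ a) (v ∩ b) := by
    intro a ha b hb hne
    refine Finset.disjoint_left.mpr (fun x hxa hxb => ?_)
    have hab : a ∩ b = ∅ :=
      hA a (Finset.mem_filter.mp ha).1 b (Finset.mem_filter.mp hb).1 hne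
    have : x ∈ a ∩ b := Finset.mem_inter.mpr
      ⟨(Finset.mem_inter.mp hxa).2, (Finset.mem_inter.mp hxb).2⟩
    simp [hab] at this
  calc N.card = ∑ _a ∈ N, 1 := by rw [Finset.card_eq_sum_ones]
    _ ≤ ∑ a ∈ N, (v ∩ a).card := Finset.sum_le_sum (fun a ha =>
        Finset.card_pos.mpr (Finset.mem_filter.mp ha).2)
    _ = (N.biUnion (fun a => v ∩ a)).card := (Finset.card_biUnion hdisj).symm
    _ ≤ v.card := Finset.card_le_card
        (Finset.biUnion_subset.mpr (fun a _ => Finset.inter_subset_left))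

/-- A 3-set meeting the pairwise-disjoint family `A` in a total of 2 points has a free element. -/
lemma aux_exists_free {A : Finset (Finset α)} {u : Finset α}
    (hcard : u.card = 3) (hsum : ∑ a ∈ A, (u ∩ a).card = 2) :
    ∃ e, e ∈ u ∧ ∀ a ∈ A, e ∉ a := by
  by_contra hcon
  push_neg at hcon
  have hsub : u ⊆ A.biUnion (fun a => u ∩ a) := by
    intro e he
    obtain ⟨a, ha, hea⟩ := hcon e he
    exact Finset.mem_biUnion.mpr ⟨a, ha, Finset.mem_inter.mpr ⟨he, hea⟩⟩
  have h1 := Finset.card_le_card hsub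
  have h2 := Finset.card_biUnion_le (s := A) (t := fun a => u ∩ a)
  omega

/-- Truncation of a 3-set: a 2-subset consisting of a point in some member of `N`
and a point free of all of `A`. -/
noncomputable def trunc (A N : Finset (Finset α)) (u : Finset α) : Finset α :=
  if h : (∃ p, p ∈ u ∧ ∃ a ∈ N, p ∈ a) ∧ (∃ e, e ∈ u ∧ ∀ a ∈ A, e ∉ a) then
    {h.1.choose, h.2.choose} else ∅

lemma trunc_spec {A N : Finset (Finset α)} (hNA : N ⊆ A) (hA : PairwiseDisjointSets A)
    (u : Finset α)
    (h1 : ∃ p, p ∈ u ∧ ∃ a ∈ N, p ∈ a) (h2 : ∃ e, e ∈ u ∧ ∀ a ∈ A, e ∉ a) :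
    (trunc A N u).card = 2 ∧ trunc A N u ⊆ u ∧
      ∀ b ∈ A, ((trunc A N u) ∩ b).Nonempty → b ∈ N := by
  have h : (∃ p, p ∈ u ∧ ∃ a ∈ N, p ∈ a) ∧ (∃ e, e ∈ u ∧ ∀ a ∈ A, e ∉ a) := ⟨h1, h2⟩
  have ht : trunc A N u = {h.1.choose, h.2.choose} := by rw [trunc, dif_pos h]
  obtain ⟨hpu, a, haN, hpa⟩ := h.1.choose_spec
  obtain ⟨heu, hefree⟩ := h.2.choose_spec
  set p := h.1.choose
  set e := h.2.choose
  have hpe : p ≠ e := by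
    intro hEq
    exact hefree a (hNA haN) (hEq ▸ hpa)
  refine ⟨?_, ?_, ?_⟩
  · rw [ht, Finset.card_insert_of_notMem (by simp [hpe]), Finset.card_singleton]
  · rw [ht]
    intro x hx
    rcases Finset.mem_insert.mp hx with rfl | hx
    · exact hpu
    · rw [Finset.mem_singleton.mp hx]; exact heu
  · intro b hbA hnon
    obtain ⟨x, hx⟩ := hnon
    have hxb := (Finset.mem_inter.mp hx).2
    have hxt := (Finset.mem_inter.mp hx).1
    rw [ht] at hxt
    rcases Finset.mem_insert.mp hxt with hxp | hxt
    · -- x = p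
      by_cases hab : a = b
      · exact hab ▸ haN
      · have h0 := hA a (hNA haN) b hbA hab
        have : x ∈ a ∩ b := Finset.mem_inter.mpr ⟨hxp ▸ hpa, hxb⟩
        simp_all
    · rw [Finset.mem_singleton.mp hxt] at hxb
      exact absurd hxb (hefree b hbA)

end Aux

/-- Hereditary 2-3-Set Packing instance `S`, solution `A` with no
local improvement of size at most 10, optimum solution `B`, `A ∩ B = ∅`.  Then there is
no `v ∈ B \ (B₁ ∪ B₂)` all of whose neighbors in `A` belong to the class `C` of sets
receiving exactly their own weight in the first weight-distribution step. -/
theorem no_vertex_with_neighborhood_in_C {α : Type*} (S A B : Finset (Finset α))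
    (hcards : ∀ s ∈ S, s.card = 2 ∨ s.card = 3)
    (hher : ∀ s ∈ S, s.card = 3 → ∀ t ⊆ s, t.card = 2 → t ∈ S)
    (hAS : A ⊆ S) (hBS : B ⊆ S)
    (hAdisj : PairwiseDisjointSets A) (hBdisj : PairwiseDisjointSets B)
    (hAB : Disjoint A B)
    (hBopt : ∀ X ⊆ S, PairwiseDisjointSets X → wsum X ≤ wsum B)
    (hnoimp : ∀ X ⊆ S, X.card ≤ 10 → ¬ IsLocalImprovement A X) :
    ¬ ∃ v ∈ B \ (B1 A B ∪ B2 A B), nbhd {v} A ⊆ Cset A B := by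
  rintro ⟨v, hv, hNC⟩
  have hvB : v ∈ B := (Finset.mem_sdiff.mp hv).1
  have hvnot : v ∉ B1 A B ∪ B2 A B := (Finset.mem_sdiff.mp hv).2
  have hvB1 : v ∉ B1 A B := fun h => hvnot (Finset.mem_union_left _ h)
  have hvB2 : v ∉ B2 A B := fun h => hvnot (Finset.mem_union_right _ h)
  have hvS : v ∈ S := hBS hvB
  have hvcard : v.card = 2 ∨ v.card = 3 := hcards v hvS
  have hwv : 1 ≤ wt v := aux_wt_one_le (by omega)
  -- the neighborhood of v in A
  set Nv : Finset (Finset α) := A.filter (fun a => (v ∩ a).Nonempty) with hNvdef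
  have hNvA : Nv ⊆ A := Finset.filter_subset _ _
  have hNveq : nbhd {v} A = Nv := by
    rw [hNvdef, nbhd]
    apply Finset.filter_congr
    intro a _
    simp
  have hNvC : ∀ a ∈ Nv, received A B a = wt a := by
    intro a ha
    have : a ∈ Cset A B := hNC (hNveq ▸ ha)
    exact (Finset.mem_filter.mp this).2
  -- the senders
  set F1 : Finset α → Finset (Finset α) :=
    fun a => (B1 A B).filter (fun u => (u ∩ a).Nonempty) with hF1def
  set F2 : Finset α → Finset (Finset α) :=
    fun a => (B2 A B).filter (fun u => (u ∩ a).Nonempty) with hF2def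
  have hrec : ∀ a, received A B a = (∑ u ∈ F1 a, wt u) + (F2 a).card := fun a => rfl
  -- basic facts about B1 and B2 members
  have hB1uniq : ∀ u ∈ B1 A B, ∀ a ∈ A, ∀ b ∈ A,
      (u ∩ a).Nonempty → (u ∩ b).Nonempty → a = b := by
    intro u hu a ha b hb hia hib
    obtain ⟨-, hc⟩ := Finset.mem_filter.mp hu
    obtain ⟨x, hx⟩ := Finset.card_eq_one.mp hc
    have h1 : a ∈ A.filter (fun a => (u ∩ a).Nonempty) := Finset.mem_filter.mpr ⟨ha, hia⟩
    have h2 : b ∈ A.filter (fun a => (u ∩ a).Nonempty) := Finset.mem_filter.mpr ⟨hb, hib⟩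
    rw [hx, Finset.mem_singleton] at h1 h2
    rw [h1, h2]
  have hB2mem : ∀ u ∈ B2 A B, u ∈ B ∧ u.card = 3 ∧ (∑ a ∈ A, (u ∩ a).card) = 2 ∧
      (A.filter (fun a => (u ∩ a).Nonempty)).card = 2 := by
    intro u hu
    have h := Finset.mem_filter.mp hu
    exact ⟨h.1, h.2.1, h.2.2.1, h.2.2.2⟩
  have hB1B : B1 A B ⊆ B := Finset.filter_subset _ _
  have hB2B : B2 A B ⊆ B := Finset.filter_subset _ _
  -- the pieces of the improvement
  set Sall : Finset (Finset α) := Nv.biUnion F1 with hSalldef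
  set S2 : Finset (Finset α) := Nv.biUnion F2 with hS2def
  set D : Finset α → ℕ :=
    fun u => (Nv.filter (fun a => (u ∩ a).Nonempty)).card with hDdef
  set S2b : Finset (Finset α) := S2.filter (fun u => D u = 2) with hS2bdef
  set S2s : Finset (Finset α) := S2.filter (fun u => ¬ D u = 2) with hS2sdef
  have hSallB1 : Sall ⊆ B1 A B := Finset.biUnion_subset.mpr (fun a _ => Finset.filter_subset _ _)
  have hS2B2 : S2 ⊆ B2 A B := Finset.biUnion_subset.mpr (fun a _ => Finset.filter_subset _ _)
  have hS2bS2 : S2b ⊆ S2 := Finset.filter_subset _ _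
  have hS2sS2 : S2s ⊆ S2 := Finset.filter_subset _ _
  -- D bounds on S2
  have hDle : ∀ u ∈ B2 A B, D u ≤ 2 := by
    intro u hu
    have hsub : Nv.filter (fun a => (u ∩ a).Nonempty) ⊆
        A.filter (fun a => (u ∩ a).Nonempty) := by
      intro a ha
      exact Finset.mem_filter.mpr ⟨hNvA (Finset.mem_filter.mp ha).1, (Finset.mem_filter.mp ha).2⟩
    have := Finset.card_le_card hsub
    rw [(hB2mem u hu).2.2.2] at this
    exact this
  have hDge : ∀ u ∈ S2, 1 ≤ D u := by
    intro u hu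
    obtain ⟨a, haNv, huF⟩ := Finset.mem_biUnion.mp hu
    have : a ∈ Nv.filter (fun a => (u ∩ a).Nonempty) :=
      Finset.mem_filter.mpr ⟨haNv, (Finset.mem_filter.mp huF).2⟩
    exact Finset.card_pos.mpr ⟨a, this⟩
  have hDone : ∀ u ∈ S2s, D u = 1 := by
    intro u hu
    have h1 := hDge u (hS2sS2 hu)
    have h2 := hDle u (hS2B2 (hS2sS2 hu))
    have h3 := (Finset.mem_filter.mp hu).2
    omega
  -- truncation facts
  have htr : ∀ u ∈ S2s, (trunc A Nv u).card = 2 ∧ trunc A Nv u ⊆ u ∧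
      ∀ b ∈ A, ((trunc A Nv u) ∩ b).Nonempty → b ∈ Nv := by
    intro u hu
    obtain ⟨a, haNv, huF⟩ := Finset.mem_biUnion.mp (hS2sS2 hu)
    obtain ⟨huB2, hnon⟩ := Finset.mem_filter.mp huF
    obtain ⟨p, hp⟩ := hnon
    have h1 : ∃ p, p ∈ u ∧ ∃ a ∈ Nv, p ∈ a :=
      ⟨p, (Finset.mem_inter.mp hp).1, a, haNv, (Finset.mem_inter.mp hp).2⟩
    have h2 : ∃ e, e ∈ u ∧ ∀ a ∈ A, e ∉ a :=
      aux_exists_free (hB2mem u huB2).2.1 (hB2mem u huB2).2.2.1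
    exact trunc_spec hNvA hAdisj u h1 h2
  set T : Finset (Finset α) := S2s.image (trunc A Nv) with hTdef
  set X : Finset (Finset α) := insert v ((Sall ∪ S2b) ∪ T) with hXdef
  -- generic intersected-subset helper
  have hsubempty : ∀ (s t x y : Finset α), s ⊆ x → t ⊆ y → x ∩ y = ∅ → s ∩ t = ∅ := by
    intro s t x y hs ht h
    exact Finset.subset_empty.mp (h ▸ Finset.inter_subset_inter hs ht)
  -- elements of X
  have hmemX : ∀ x ∈ X, x = v ∨ x ∈ Sall ∨ x ∈ S2b ∨ ∃ u ∈ S2s, x = trunc A Nv u := by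
    intro x hx
    rcases Finset.mem_insert.mp hx with h | h
    · exact Or.inl h
    rcases Finset.mem_union.mp h with h | h
    · rcases Finset.mem_union.mp h with h | h
      · exact Or.inr (Or.inl h)
      · exact Or.inr (Or.inr (Or.inl h))
    · obtain ⟨u, hu, hux⟩ := Finset.mem_image.mp h
      exact Or.inr (Or.inr (Or.inr ⟨u, hu, hux.symm⟩))
  -- elements of X in the B-part differ from elements of S2s, truncations aside
  have hBpart : ∀ x ∈ X, (x ∈ B ∧ ∀ u ∈ S2s, x ≠ u) ∨ ∃ u ∈ S2s, x = trunc A Nv u := by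
    intro x hx
    rcases hmemX x hx with rfl | h | h | h
    · refine Or.inl ⟨hvB, fun u hu hEq => hvB2 (hEq ▸ hS2B2 (hS2sS2 hu))⟩
    · refine Or.inl ⟨hB1B (hSallB1 h), fun u hu hEq => ?_⟩
      have h1 := (Finset.mem_filter.mp (hSallB1 h)).2
      have h2 := (hB2mem u (hS2B2 (hS2sS2 hu))).2.2.2
      rw [hEq] at h1
      omega
    · refine Or.inl ⟨hB2B (hS2B2 (hS2bS2 h)), fun u hu hEq => ?_⟩
      have h1 := (Finset.mem_filter.mp h).2
      have h2 := hDone u hu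
      rw [hEq] at h1
      omega
    · exact Or.inr h
  -- pairwise disjointness of X
  have hXdisj : PairwiseDisjointSets X := by
    intro x hx y hy hne
    rcases hBpart x hx with ⟨hxB, hxne⟩ | ⟨u, hu, rfl⟩ <;>
      rcases hBpart y hy with ⟨hyB, hyne⟩ | ⟨u', hu', rfl⟩
    · exact hBdisj x hxB y hyB hne
    · have huB : u' ∈ B := hB2B (hS2B2 (hS2sS2 hu'))
      have hxu : x ∩ u' = ∅ := hBdisj x hxB u' huB (hxne u' hu')
      exact hsubempty _ _ x u' (subset_refl x) (htr u' hu').2.1 hxu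
    · have huB : u ∈ B := hB2B (hS2B2 (hS2sS2 hu))
      have hyu : u ∩ y = ∅ := hBdisj u huB y hyB (fun h => hyne u hu h.symm)
      exact hsubempty _ _ u y (htr u hu).2.1 (subset_refl y) hyu
    · have huu : u ≠ u' := fun h => hne (h ▸ rfl)
      have h0 : u ∩ u' = ∅ :=
        hBdisj u (hB2B (hS2B2 (hS2sS2 hu))) u' (hB2B (hS2B2 (hS2sS2 hu'))) huu
      exact hsubempty _ _ u u' (htr u hu).2.1 (htr u' hu').2.1 h0
  -- v is not among the other pieces
  have hvnotin : v ∉ (Sall ∪ S2b) ∪ T := by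
    intro h
    rcases Finset.mem_union.mp h with h | h
    · rcases Finset.mem_union.mp h with h | h
      · exact hvB1 (hSallB1 h)
      · exact hvB2 (hS2B2 (hS2bS2 h))
    · obtain ⟨u, hu, hux⟩ := Finset.mem_image.mp h
      have huB : u ∈ B := hB2B (hS2B2 (hS2sS2 hu))
      have hvu : v ≠ u := fun hEq => hvB2 (hEq ▸ hS2B2 (hS2sS2 hu))
      have h0 : v ∩ u = ∅ := hBdisj v hvB u huB hvu
      have h1 : trunc A Nv u ∩ u = ∅ := by rw [hux]; exact h0
      have h2 : (trunc A Nv u).Nonempty := Finset.card_pos.mp (by rw [(htr u hu).1]; omega)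
      obtain ⟨x, hx⟩ := h2
      have : x ∈ trunc A Nv u ∩ u := Finset.mem_inter.mpr ⟨hx, (htr u hu).2.1 hx⟩
      rw [h1] at this
      exact absurd this (Finset.notMem_empty x)
  -- union disjointness
  have hd1 : Disjoint Sall S2b := by
    refine Finset.disjoint_left.mpr (fun u hu1 hu2 => ?_)
    have h1 := (Finset.mem_filter.mp (hSallB1 hu1)).2
    have h2 := (hB2mem u (hS2B2 (hS2bS2 hu2))).2.2.2
    omega
  have hd2 : Disjoint (Sall ∪ S2b) T := by
    refine Finset.disjoint_left.mpr (fun x hx hxT => ?_)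
    obtain ⟨u, hu, hux⟩ := Finset.mem_image.mp hxT
    have huB : u ∈ B := hB2B (hS2B2 (hS2sS2 hu))
    have hxB : x ∈ B := by
      rcases Finset.mem_union.mp hx with h | h
      · exact hB1B (hSallB1 h)
      · exact hB2B (hS2B2 (hS2bS2 h))
    have hxcard : x.card = 2 := by rw [← hux]; exact (htr u hu).1
    have hxu : x ≠ u := by
      intro hEq
      have := (hB2mem u (hS2B2 (hS2sS2 hu))).2.1
      rw [hEq] at hxcard
      omega
    have h0 : x ∩ u = ∅ := hBdisj x hxB u huB hxu
    have h1 : x ∩ x = ∅ := by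
      have := hsubempty x x x u (subset_refl x) (hux ▸ (htr u hu).2.1) h0
      exact this
    rw [Finset.inter_self] at h1
    rw [h1] at hxcard
    simp at hxcard
  -- injectivity of trunc on S2s
  have hinj : ∀ x ∈ S2s, ∀ y ∈ S2s, trunc A Nv x = trunc A Nv y → x = y := by
    intro x hx y hy hEq
    by_contra hne
    have h0 : x ∩ y = ∅ :=
      hBdisj x (hB2B (hS2B2 (hS2sS2 hx))) y (hB2B (hS2B2 (hS2sS2 hy))) hne
    have h1 : trunc A Nv x ∩ trunc A Nv y = ∅ :=
      hsubempty _ _ x y (htr x hx).2.1 (htr y hy).2.1 h0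
    rw [hEq, Finset.inter_self] at h1
    have := (htr y hy).1
    rw [h1] at this
    simp at this
  -- the weight of the pieces
  have hwT : ∑ x ∈ T, wt x = S2s.card := by
    rw [hTdef, Finset.sum_image hinj]
    have : ∀ u ∈ S2s, wt (trunc A Nv u) = 1 := by
      intro u hu
      have := (htr u hu).1
      unfold wt
      omega
    rw [Finset.sum_congr rfl this, Finset.sum_const, smul_eq_mul, mul_one]
  have hwS2b : wsum S2b = 2 * S2b.card := by
    rw [wsum]
    have : ∀ u ∈ S2b, wt u = 2 := by
      intro u hu
      have := (hB2mem u (hS2B2 (hS2bS2 hu))).2.1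
      unfold wt
      omega
    rw [Finset.sum_congr rfl this, Finset.sum_const, smul_eq_mul, mul_comm]
  -- the main counting identity
  have hdisjF1 : Set.PairwiseDisjoint ↑Nv F1 := by
    intro a ha b hb hne
    refine Finset.disjoint_left.mpr (fun u hu1 hu2 => ?_)
    have h1 := Finset.mem_filter.mp hu1
    have h2 := Finset.mem_filter.mp hu2
    exact hne (hB1uniq u h1.1 a (hNvA (Finset.mem_coe.mp ha)) b (hNvA (Finset.mem_coe.mp hb))
      h1.2 h2.2)
  have hsum1 : ∑ a ∈ Nv, (∑ u ∈ F1 a, wt u) = wsum Sall := by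
    rw [hSalldef, wsum, Finset.sum_biUnion hdisjF1]
  have hsum2 : ∑ a ∈ Nv, (F2 a).card = 2 * S2b.card + S2s.card := by
    have e1 : ∀ a ∈ Nv, (F2 a).card = ∑ u ∈ B2 A B, if (u ∩ a).Nonempty then 1 else 0 :=
      fun a _ => Finset.card_filter _ _
    have e2 : ∀ u ∈ B2 A B, (∑ a ∈ Nv, if (u ∩ a).Nonempty then 1 else 0) = D u :=
      fun u _ => (Finset.card_filter _ _).symm
    have e3 : ∀ u ∈ B2 A B, u ∉ S2 → D u = 0 := by
      intro u hu hnot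
      rw [hDdef]
      simp only [Finset.card_eq_zero]
      rw [Finset.filter_eq_empty_iff]
      intro a ha hnon
      exact hnot (Finset.mem_biUnion.mpr ⟨a, ha, Finset.mem_filter.mpr ⟨hu, hnon⟩⟩)
    have e4 : ∀ u ∈ S2b, D u = 2 := fun u hu => (Finset.mem_filter.mp hu).2
    calc ∑ a ∈ Nv, (F2 a).card
        = ∑ a ∈ Nv, ∑ u ∈ B2 A B, (if (u ∩ a).Nonempty then 1 else 0) :=
          Finset.sum_congr rfl e1
      _ = ∑ u ∈ B2 A B, ∑ a ∈ Nv, (if (u ∩ a).Nonempty then 1 else 0) := Finset.sum_comm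
      _ = ∑ u ∈ B2 A B, D u := Finset.sum_congr rfl e2
      _ = ∑ u ∈ S2, D u := (Finset.sum_subset hS2B2 e3).symm
      _ = ∑ u ∈ S2b, D u + ∑ u ∈ S2s, D u :=
          (Finset.sum_filter_add_sum_filter_not S2 (fun u => D u = 2) D).symm
      _ = 2 * S2b.card + S2s.card := by
          rw [Finset.sum_congr rfl e4, Finset.sum_congr rfl hDone, Finset.sum_const,
            Finset.sum_const, smul_eq_mul, smul_eq_mul, mul_one, mul_comm]
  have hkey : ∑ a ∈ Nv, wt a = wsum Sall + wsum S2b + S2s.card := by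
    have e0 : ∀ a ∈ Nv, wt a = (∑ u ∈ F1 a, wt u) + (F2 a).card := by
      intro a ha
      rw [← hNvC a ha, hrec]
    calc ∑ a ∈ Nv, wt a = ∑ a ∈ Nv, ((∑ u ∈ F1 a, wt u) + (F2 a).card) :=
        Finset.sum_congr rfl e0
      _ = (∑ a ∈ Nv, ∑ u ∈ F1 a, wt u) + ∑ a ∈ Nv, (F2 a).card := Finset.sum_add_distrib
      _ = wsum Sall + (2 * S2b.card + S2s.card) := by rw [hsum1, hsum2]
      _ = wsum Sall + wsum S2b + S2s.card := by rw [hwS2b]; ring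
  -- total weight of X
  have hwX : wsum X = wt v + (wsum Sall + wsum S2b + S2s.card) := by
    rw [hXdef, wsum, Finset.sum_insert hvnotin, Finset.sum_union hd2, Finset.sum_union hd1,
      hwT]
    rw [wsum, wsum]
  -- neighborhood of X is contained in Nv
  have hnX : nbhd X A ⊆ Nv := by
    intro a ha
    have h := Finset.mem_filter.mp ha
    obtain ⟨x, hxX, hxa⟩ := h.2
    have haA := h.1
    rcases hmemX x hxX with rfl | hx | hx | ⟨u, hu, rfl⟩
    · exact Finset.mem_filter.mpr ⟨haA, hxa⟩
    · obtain ⟨a0, ha0, hxF⟩ := Finset.mem_biUnion.mp hx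
      have hxB1 := (Finset.mem_filter.mp hxF).1
      have hxa0 := (Finset.mem_filter.mp hxF).2
      have : a = a0 := hB1uniq x hxB1 a haA a0 (hNvA ha0) hxa hxa0
      exact this ▸ ha0
    · have hxB2 := hS2B2 (hS2bS2 hx)
      have hD2 : D x = 2 := (Finset.mem_filter.mp hx).2
      have hsub : Nv.filter (fun b => (x ∩ b).Nonempty) ⊆
          A.filter (fun b => (x ∩ b).Nonempty) := by
        intro b hb
        exact Finset.mem_filter.mpr ⟨hNvA (Finset.mem_filter.mp hb).1,
          (Finset.mem_filter.mp hb).2⟩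
      have heq : Nv.filter (fun b => (x ∩ b).Nonempty) =
          A.filter (fun b => (x ∩ b).Nonempty) := by
        apply Finset.eq_of_subset_of_card_le hsub
        rw [(hB2mem x hxB2).2.2.2]
        exact hD2.ge
      have : a ∈ A.filter (fun b => (x ∩ b).Nonempty) := Finset.mem_filter.mpr ⟨haA, hxa⟩
      rw [← heq] at this
      exact (Finset.mem_filter.mp this).1
    · exact (htr u hu).2.2 a haA hxa
  -- X is a sub-collection of S
  have hXS : X ⊆ S := by
    intro x hx
    rcases hmemX x hx with rfl | h | h | ⟨u, hu, rfl⟩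
    · exact hvS
    · exact hBS (hB1B (hSallB1 h))
    · exact hBS (hB2B (hS2B2 (hS2bS2 h)))
    · have huB2 := hS2B2 (hS2sS2 hu)
      have huS : u ∈ S := hBS (hB2B huB2)
      exact hher u huS (hB2mem u huB2).2.1 (trunc A Nv u) (htr u hu).2.1 (htr u hu).1
  -- cardinality bound
  have hFcard : ∀ a ∈ Nv, (F1 a).card + (F2 a).card ≤ 2 := by
    intro a ha
    have hra := hNvC a ha
    rw [hrec] at hra
    have h1 : (F1 a).card ≤ ∑ u ∈ F1 a, wt u := by
      rw [Finset.card_eq_sum_ones]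
      refine Finset.sum_le_sum (fun u hu => ?_)
      have huS : u ∈ S := hBS (hB1B (Finset.mem_of_mem_filter u hu))
      exact aux_wt_one_le (by rcases hcards u huS with h | h <;> omega)
    have h2 : wt a ≤ 2 := by
      have : a ∈ S := hAS (hNvA ha)
      unfold wt
      rcases hcards a this with h | h <;> omega
    omega
  have hNvcard : Nv.card ≤ 3 := by
    have := aux_card_nbr_le hAdisj v
    rw [← hNvdef] at this
    omega
  have hXcard : X.card ≤ 10 := by
    have h1 : X.card ≤ ((Sall ∪ S2b) ∪ T).card + 1 := Finset.card_insert_le _ _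
    have h2 : ((Sall ∪ S2b) ∪ T).card ≤ (Sall ∪ S2b).card + T.card := Finset.card_union_le _ _
    have h3 : (Sall ∪ S2b).card ≤ Sall.card + S2b.card := Finset.card_union_le _ _
    have h4 : T.card ≤ S2s.card := Finset.card_image_le
    have h5 : S2b.card + S2s.card = S2.card :=
      Finset.card_filter_add_card_filter_not (fun u => D u = 2)
    have h6 : S2.card ≤ ∑ a ∈ Nv, (F2 a).card := Finset.card_biUnion_le
    have h7 : Sall.card ≤ ∑ a ∈ Nv, (F1 a).card := Finset.card_biUnion_le
    have h8 : ∑ a ∈ Nv, (F1 a).card + ∑ a ∈ Nv, (F2 a).card ≤ 2 * Nv.card := by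
      rw [← Finset.sum_add_distrib]
      calc ∑ a ∈ Nv, ((F1 a).card + (F2 a).card) ≤ ∑ _a ∈ Nv, 2 :=
          Finset.sum_le_sum hFcard
        _ = 2 * Nv.card := by rw [Finset.sum_const, smul_eq_mul, mul_comm]
    omega
  -- X is a local improvement
  have himp : IsLocalImprovement A X := by
    refine ⟨hXdisj, Or.inl ?_⟩
    have h1 : wsum (nbhd X A) ≤ ∑ a ∈ Nv, wt a := Finset.sum_le_sum_of_subset hnX
    rw [hwX, ← hkey]
    omega
  exact hnoimp X hXS hXcard himp
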